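/- Let q be a quasilinear quadratic form over a field F of characteristic 2 and let L be a field extension of F. Then there exists a subform r of the anisotropic part q_an such that r_L ≅ (q_L)_an. -/

import Mathlib

open scoped BigOperators

namespace QLin

variable (K : Type) [Field K]

/-- Value of the diagonal (quasilinear) quadratic form with coefficients `d` at the vector `v`. -/
def qf {n : ℕ} (d : Fin n → K) (v : Fin n → K) : K := ∑ i, d i * v i ^ 2

/-- The set `D(q)` of values represented by the diagonal form `d`. -/
def Dset {n : ℕ} (d : Fin n → K) : Set K := Set.range (qf K d)

/-- A diagonal quadratic form is anisotropic if it has no nontrivial zero. -/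
def Anis {n : ℕ} (d : Fin n → K) : Prop := ∀ v : Fin n → K, qf K d v = 0 → v = 0

/-- The isotropy index `i₀`: the maximal dimension of a totally isotropic subspace. -/
noncomputable def i0 {n : ℕ} (d : Fin n → K) : ℕ :=
  sSup {m | ∃ W : Submodule K (Fin n → K), (∀ v ∈ W, qf K d v = 0) ∧ Module.finrank K W = m}

/-- Isometry of two diagonal quadratic forms (possibly of different ambient dimensions;
an isometry forces the dimensions to agree). -/
def Isom {n m : ℕ} (d : Fin n → K) (e : Fin m → K) : Prop :=
  ∃ φ : (Fin n → K) ≃ₗ[K] (Fin m → K), ∀ v, qf K e (φ v) = qf K d v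

/-- `r` is a subform of `q` : `q ≅ r ⊥ s` for some form `s`. -/
def Subform {n m : ℕ} (r : Fin n → K) (q : Fin m → K) : Prop :=
  ∃ (k : ℕ) (s : Fin k → K), Isom K q (Fin.append r s)

/-- `d` is similar to `e` : `e ≅ a • d` for some `a ≠ 0`. -/
def Similar {n m : ℕ} (d : Fin n → K) (e : Fin m → K) : Prop :=
  ∃ a : K, a ≠ 0 ∧ Isom K (fun i => a * d i) e

/-- `d` is similar to a subform of `q`. -/
def SimSubform {n m : ℕ} (d : Fin n → K) (q : Fin m → K) : Prop :=
  ∃ a : K, a ≠ 0 ∧ Subform K (fun i => a * d i) q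

/-- Tensor product of diagonal quadratic forms. -/
def tens {n m : ℕ} (d : Fin n → K) (e : Fin m → K) : Fin (n * m) → K :=
  fun k => d (finProdFinEquiv.symm k).1 * e (finProdFinEquiv.symm k).2

/-- `q` is divisible by `π` : `q ≅ π ⊗ r` for some form `r`. -/
def Divisible {n m : ℕ} (π : Fin n → K) (q : Fin m → K) : Prop :=
  ∃ (k : ℕ) (r : Fin k → K), Isom K q (tens K π r)

/-- The diagonal coefficients of the `s`-fold quasi-Pfister form `⟨⟨a₁,…,a_s⟩⟩ =
`⟨1,a₁⟩ ⊗ ⋯ ⊗ ⟨1,a_s⟩`: the products of the `a i` over all subsets of the index set. -/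
def qPfister {s : ℕ} (a : Fin s → K) : Fin (2 ^ s) → K :=
  fun j => ∏ i : Fin s, if Nat.testBit (j : ℕ) (i : ℕ) then a i else 1

/-- `r` is (a representative of) the anisotropic part of `q`:
`r` is anisotropic and `q ≅ i₀(q)·⟨0⟩ ⊥ r`. -/
def IsAnisPart {n m : ℕ} (r : Fin n → K) (q : Fin m → K) : Prop :=
  Anis K r ∧ ∃ k : ℕ, Isom K q (Fin.append (fun _ : Fin k => (0 : K)) r)

/-- The divisibility index `𝔡₀(q)`: the largest `s` such that the anisotropic part of `q`
is divisible by an `s`-fold quasi-Pfister form. -/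
noncomputable def d0 {n : ℕ} (q : Fin n → K) : ℕ :=
  sSup {s | ∃ a : Fin s → K, (∀ i, a i ≠ 0) ∧
    ∃ (k : ℕ) (r : Fin k → K), IsAnisPart K r q ∧ Divisible K (qPfister K a) r}

/-- The norm field `N(q)`: the smallest subfield of `K` containing all squares and all
ratios of nonzero represented values of `q`. -/
def normField {n : ℕ} (d : Fin n → K) : Subfield K :=
  Subfield.closure ((Set.range fun x : K => x ^ 2) ∪
    {z | ∃ a ∈ Dset K d, ∃ b ∈ Dset K d, b ≠ 0 ∧ z = a / b})

/-- `lndeg(q)`: the base-2 logarithm of the dimension of the norm form of `q`, i.e. the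
(unique, when `q` is nonzero) `s` such that some anisotropic `s`-fold quasi-Pfister form
represents exactly the elements of the norm field of `q`. -/
noncomputable def lndeg {n : ℕ} (d : Fin n → K) : ℕ :=
  sInf {s | ∃ a : Fin s → K, (∀ i, a i ≠ 0) ∧ Anis K (qPfister K a) ∧
    Dset K (qPfister K a) = (normField K d : Set K)}

/-- Base change of a diagonal quadratic form along a field extension `F → K`. -/
def bc (F : Type) [Field F] (K : Type) [Field K] [Algebra F K] {n : ℕ} (d : Fin n → F) :
    Fin n → K := fun i => algebraMap F K (d i)

/-- The defining polynomial of the standard affine chart of the projective quadric `{p = 0}`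
attached to a diagonal form `p` of dimension `n + 2` (dehomogenized at the last variable). -/
noncomputable def chartD (F : Type) [Field F] {n : ℕ} (d : Fin (n + 2) → F) :
    MvPolynomial (Fin (n + 1)) F :=
  (∑ i : Fin (n + 1), MvPolynomial.C (d i.castSucc) * MvPolynomial.X i ^ 2) +
    MvPolynomial.C (d (Fin.last (n + 1)))

/-- `K` is (realizes) the function field `F(p)` of the projective quadric `{p = 0}`:
`K` is generated over `F` by a point `x` of the affine chart of the quadric whose
ideal of relations is exactly the one generated by the defining equation. -/
def IsFunFld (F : Type) [Field F] {n : ℕ} (p : Fin (n + 2) → F) (K : Type) [Field K]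
    [Algebra F K] : Prop :=
  ∃ x : Fin (n + 1) → K,
    RingHom.ker (MvPolynomial.aeval x : MvPolynomial (Fin (n + 1)) F →ₐ[F] K) =
      Ideal.span {chartD F p} ∧
    ∀ z : K, ∃ a b : MvPolynomial (Fin (n + 1)) F,
      MvPolynomial.aeval x b ≠ 0 ∧ z * MvPolynomial.aeval x b = MvPolynomial.aeval x a

/-- The full diagonal polynomial of a diagonal form (the equation of the affine cone). -/
noncomputable def diagPoly (F : Type) [Field F] {n : ℕ} (d : Fin n → F) :
    MvPolynomial (Fin n) F :=
  ∑ i : Fin n, MvPolynomial.C (d i) * MvPolynomial.X i ^ 2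

/-- `M` is (realizes) the affine cone function field `F[p]`, i.e. the fraction field of
`F[T₁,…,Tₙ]/(p(T))`. -/
def IsAffFunFld (F : Type) [Field F] {n : ℕ} (p : Fin n → F) (M : Type) [Field M]
    [Algebra F M] : Prop :=
  ∃ x : Fin n → M,
    RingHom.ker (MvPolynomial.aeval x : MvPolynomial (Fin n) F →ₐ[F] M) =
      Ideal.span {diagPoly F p} ∧
    ∀ z : M, ∃ a b : MvPolynomial (Fin n) F,
      MvPolynomial.aeval x b ≠ 0 ∧ z * MvPolynomial.aeval x b = MvPolynomial.aeval x a

/-- `L` is a purely transcendental field extension of `F`. -/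
def IsPurelyTransc (F L : Type) [Field F] [Field L] [Algebra F L] : Prop :=
  ∃ s : Set L, AlgebraicIndependent F (Subtype.val : s → L) ∧
    IntermediateField.adjoin F s = ⊤

end QLin

section Helpers

open QLin

variable {K : Type} [Field K]

lemma sq_sum (h2 : (2 : K) = 0) {ι : Type} (s : Finset ι) (f : ι → K) :
    (∑ i ∈ s, f i) ^ 2 = ∑ i ∈ s, f i ^ 2 := by
  induction s using Finset.cons_induction with
  | empty => simp
  | cons a s ha ih =>
    rw [Finset.sum_cons, Finset.sum_cons, add_sq, ih, h2]
    ring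

lemma qf_add (h2 : (2 : K) = 0) {n : ℕ} (d v w : Fin n → K) :
    qf K d (v + w) = qf K d v + qf K d w := by
  simp only [qf, Pi.add_apply, add_sq, h2]
  rw [← Finset.sum_add_distrib]
  exact Finset.sum_congr rfl fun i _ => by ring

lemma qf_smul {n : ℕ} (d : Fin n → K) (c : K) (v : Fin n → K) :
    qf K d (c • v) = c ^ 2 * qf K d v := by
  simp only [qf, Pi.smul_apply, smul_eq_mul, Finset.mul_sum]
  exact Finset.sum_congr rfl fun i _ => by ring

lemma qf_sum (h2 : (2 : K) = 0) {n : ℕ} (d : Fin n → K) {ι : Type} (s : Finset ι)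
    (v : ι → (Fin n → K)) : qf K d (∑ i ∈ s, v i) = ∑ i ∈ s, qf K d (v i) := by
  induction s using Finset.cons_induction with
  | empty => simp [qf]
  | cons a s ha ih => rw [Finset.sum_cons, Finset.sum_cons, qf_add h2, ih]

lemma qf_single {n : ℕ} (d : Fin n → K) (l : Fin n) (c : K) :
    qf K d (Pi.single l c) = d l * c ^ 2 := by
  rw [qf, Finset.sum_eq_single l]
  · simp
  · intro i _ hne
    rw [Pi.single_eq_of_ne hne]
    ring
  · simp

lemma qf_append {a b : ℕ} (f : Fin a → K) (g : Fin b → K) (w : Fin (a + b) → K) :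
    qf K (Fin.append f g) w
      = qf K f (fun i => w (Fin.castAdd b i)) + qf K g (fun j => w (Fin.natAdd a j)) := by
  simp [qf, Fin.sum_univ_add, Fin.append_left, Fin.append_right]

lemma isom_symm {a b : ℕ} {d : Fin a → K} {e : Fin b → K} (h : Isom K d e) : Isom K e d := by
  obtain ⟨φ, hφ⟩ := h
  refine ⟨φ.symm, fun w => ?_⟩
  conv_rhs => rw [← φ.apply_symm_apply w]
  rw [hφ]

lemma isom_trans {a b c : ℕ} {d : Fin a → K} {e : Fin b → K} {f : Fin c → K}
    (h1 : Isom K d e) (h2 : Isom K e f) : Isom K d f := by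
  obtain ⟨φ, hφ⟩ := h1
  obtain ⟨ψ, hψ⟩ := h2
  refine ⟨φ.trans ψ, fun v => ?_⟩
  rw [LinearEquiv.trans_apply, hψ, hφ]

/-- Precomposition with an equivalence of index sets, as a linear equivalence. -/
def precompLE (σ : Fin a ≃ Fin b) : (Fin a → K) ≃ₗ[K] (Fin b → K) where
  toFun v := v ∘ σ.symm
  invFun w := w ∘ σ
  map_add' _ _ := rfl
  map_smul' _ _ := rfl
  left_inv v := by funext i; simp
  right_inv w := by funext i; simp

lemma isom_comp_equiv {a b : ℕ} (σ : Fin a ≃ Fin b) (d : Fin b → K) :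
    Isom K (d ∘ σ) d := by
  refine ⟨precompLE σ, fun v => ?_⟩
  show (∑ i, d i * (v (σ.symm i)) ^ 2) = ∑ j, (d ∘ σ) j * v j ^ 2
  rw [← Equiv.sum_comp σ (fun i => d i * (v (σ.symm i)) ^ 2)]
  simp

lemma subform_of_injective {t m : ℕ} (d : Fin m → K) (ι : Fin t → Fin m)
    (hι : Function.Injective ι) : Subform K (d ∘ ι) d := by
  classical
  set p : Fin m → Prop := fun x => x ∈ Set.range ι with hp
  set k := Fintype.card {x // ¬ p x} with hk
  set e2 : {x // ¬ p x} ≃ Fin k := Fintype.equivFin _ with he2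
  refine ⟨k, fun j => d ((e2.symm j) : Fin m), ?_⟩
  set e1 : Fin t ≃ {x // p x} := Equiv.ofInjective ι hι with he1
  set τ : Fin (t + k) ≃ Fin m :=
    (finSumFinEquiv.symm.trans ((e1.sumCongr e2.symm).trans (Equiv.sumCompl p))) with hτ
  have hEq : Fin.append (d ∘ ι) (fun j => d ((e2.symm j) : Fin m)) = d ∘ τ := by
    funext x
    obtain ⟨y, rfl⟩ := finSumFinEquiv.surjective x
    cases y with
    | inl i =>
      simp only [hτ, Function.comp_apply, Equiv.trans_apply, Equiv.symm_apply_apply,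
        finSumFinEquiv_apply_left, finSumFinEquiv_symm_apply_castAdd, finSumFinEquiv_symm_apply_natAdd, Fin.append_left, Equiv.sumCongr_apply, Sum.map_inl,
        Equiv.sumCompl_apply_inl]
      rfl
    | inr j => simp [τ, Fin.append_right]
  rw [hEq]
  exact isom_symm (isom_comp_equiv τ d)

/-- Splitting of a tuple into two blocks, as a linear equivalence. -/
def splitLE (K : Type) [Field K] (a b : ℕ) :
    (Fin (a + b) → K) ≃ₗ[K] (Fin a → K) × (Fin b → K) where
  toFun w := (fun i => w (Fin.castAdd b i), fun j => w (Fin.natAdd a j))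
  invFun p := Fin.append p.1 p.2
  map_add' _ _ := rfl
  map_smul' _ _ := rfl
  left_inv w := by
    funext x
    induction x using Fin.addCases with
    | left i => simp
    | right j => simp
  right_inv p := by
    ext i <;> simp

lemma isom_append_left {c a b : ℕ} (z : Fin c → K) {x : Fin a → K} {y : Fin b → K}
    (h : Isom K x y) : Isom K (Fin.append z x) (Fin.append z y) := by
  obtain ⟨φ, hφ⟩ := h
  refine ⟨(splitLE K c a).trans (((LinearEquiv.refl K (Fin c → K)).prodCongr φ).trans
    (splitLE K c b).symm), fun v => ?_⟩
  show qf K (Fin.append z y)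
      (Fin.append (fun i => v (Fin.castAdd a i)) (φ fun j => v (Fin.natAdd c j))) = _
  rw [qf_append, qf_append]
  simp only [Fin.append_left, Fin.append_right]
  rw [hφ]

lemma append_zero_zero {a b : ℕ} :
    (Fin.append (fun _ : Fin a => (0 : K)) (fun _ : Fin b => (0 : K)))
      = (fun _ : Fin (a + b) => (0 : K)) := by
  funext x
  induction x using Fin.addCases with
  | left i => simp
  | right j => simp

lemma isom_zero_assoc {c u t : ℕ} (x : Fin t → K) :
    Isom K (Fin.append (fun _ : Fin c => (0 : K)) (Fin.append (fun _ : Fin u => (0 : K)) x))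
           (Fin.append (fun _ : Fin (c + u) => (0 : K)) x) := by
  have h := Fin.append_assoc (fun _ : Fin c => (0 : K)) (fun _ : Fin u => (0 : K)) x
  rw [append_zero_zero] at h
  rw [h]
  exact isom_symm (isom_comp_equiv (finCongr (Nat.add_assoc c u t)) _)

lemma isom_remove (h2 : (2 : K) = 0) {m : ℕ} (d : Fin (m + 1) → K) (v : Fin (m + 1) → K)
    (hv : qf K d v = 0) (i : Fin (m + 1)) (hvi : v i ≠ 0) :
    Isom K d (Fin.append (fun _ : Fin 1 => (0 : K)) (d ∘ i.succAbove)) := by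
  classical
  set z0 : Fin (1 + m) := Fin.castAdd m 0 with hz0
  set ψf : (Fin (1 + m) → K) → (Fin (m + 1) → K) := fun w =>
    w z0 • v + ∑ j : Fin m, w (Fin.natAdd 1 j) • (Pi.single (i.succAbove j) (1 : K) : Fin (m + 1) → K) with hψf
  set ψ : (Fin (1 + m) → K) →ₗ[K] (Fin (m + 1) → K) :=
    { toFun := ψf
      map_add' := by
        intro w w'
        simp only [ψf, Pi.add_apply, add_smul, Finset.sum_add_distrib]
        abel
      map_smul' := by
        intro c w
        simp only [ψf, Pi.smul_apply, smul_eq_mul, mul_smul, RingHom.id_apply,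
          Finset.smul_sum, smul_add] } with hψdef
  have hψapp : ∀ w, ψ w = ψf w := fun w => rfl
  have hker : ∀ w, ψ w = 0 → w = 0 := by
    intro w hw
    rw [hψapp, hψf] at hw
    have h0 : w z0 = 0 := by
      have hwi := congrFun hw i
      simp only [Pi.add_apply, Pi.smul_apply, smul_eq_mul, Finset.sum_apply,
        Pi.zero_apply] at hwi
      rw [Finset.sum_eq_zero (fun j _ => by
        rw [Pi.single_eq_of_ne (Fin.succAbove_ne i j).symm]; ring), add_zero] at hwi
      rcases mul_eq_zero.mp hwi with h | h
      · exact h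
      · exact absurd h hvi
    have hj : ∀ j : Fin m, w (Fin.natAdd 1 j) = 0 := by
      intro j
      have hwj := congrFun hw (i.succAbove j)
      simp only [Pi.add_apply, Pi.smul_apply, smul_eq_mul, Finset.sum_apply,
        Pi.zero_apply, h0, zero_mul, zero_add] at hwj
      rw [Finset.sum_eq_single j (fun j' _ hne => by
          rw [Pi.single_eq_of_ne (fun hc => hne (Fin.succAbove_right_injective hc).symm)]
          ring)
        (fun hmem => absurd (Finset.mem_univ j) hmem)] at hwj
      simpa using hwj
    funext x
    induction x using Fin.addCases with
    | left x0 =>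
      have : x0 = 0 := Subsingleton.elim _ _
      rw [this]
      exact h0
    | right j => exact hj j
  have hinj : Function.Injective ψ :=
    LinearMap.ker_eq_bot.mp (LinearMap.ker_eq_bot'.mpr hker)
  have hdim : Module.finrank K (Fin (1 + m) → K) = Module.finrank K (Fin (m + 1) → K) := by
    simp [Module.finrank_fin_fun, Nat.add_comm]
  set E := ψ.linearEquivOfInjective hinj hdim with hE
  have hEapp : ∀ w, E w = ψf w := fun w => rfl
  have key : ∀ w, qf K d (ψf w)
      = qf K (Fin.append (fun _ : Fin 1 => (0 : K)) (d ∘ i.succAbove)) w := by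
    intro w
    rw [hψf]
    rw [qf_add h2, qf_smul, qf_sum h2, hv, qf_append]
    simp only [qf_smul, qf_single]
    have hz : qf K (fun _ : Fin 1 => (0 : K)) (fun i1 => w (Fin.castAdd m i1)) = 0 := by
      simp [qf]
    rw [hz]
    simp only [mul_zero, zero_add]
    exact Finset.sum_congr rfl fun j _ => by simp only [Function.comp_apply]; ring
  refine ⟨E.symm, fun x => ?_⟩
  obtain ⟨w, rfl⟩ := E.surjective x
  rw [E.symm_apply_apply, hEapp]
  exact (key w).symm

lemma main_anis_case {m : ℕ} (d : Fin m → K) (hA : Anis K d) :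
    ∃ (u t : ℕ) (ι : Fin t → Fin m), Function.Injective ι ∧ Anis K (d ∘ ι) ∧
      Isom K d (Fin.append (fun _ : Fin u => (0 : K)) (d ∘ ι)) := by
  refine ⟨0, m, id, Function.injective_id, by rwa [Function.comp_id], ?_⟩
  rw [Function.comp_id]
  have hz : (fun _ : Fin 0 => (0 : K)) = Fin.elim0 := funext fun x => x.elim0
  have hcast : Fin.append (fun _ : Fin 0 => (0 : K)) d = d ∘ ⇑(finCongr (Nat.zero_add m)) := by
    rw [hz, Fin.elim0_append]
    rfl
  rw [hcast]
  exact isom_symm (isom_comp_equiv (finCongr (Nat.zero_add m)) d)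

lemma main_ind (h2 : (2 : K) = 0) : ∀ (m : ℕ) (d : Fin m → K),
    ∃ (u t : ℕ) (ι : Fin t → Fin m), Function.Injective ι ∧ Anis K (d ∘ ι) ∧
      Isom K d (Fin.append (fun _ : Fin u => (0 : K)) (d ∘ ι)) := by
  intro m
  induction m with
  | zero =>
    intro d
    exact main_anis_case d (fun v _ => funext fun x => x.elim0)
  | succ m ih =>
    intro d
    by_cases hA : Anis K d
    · exact main_anis_case d hA
    · rw [Anis] at hA
      push_neg at hA
      obtain ⟨v, hv0, hvne⟩ := hA
      obtain ⟨i, hvi⟩ := Function.ne_iff.mp hvne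
      have h1 := isom_remove h2 d v hv0 i hvi
      obtain ⟨u, t, ι', hinj', hanis', h2'⟩ := ih (d ∘ i.succAbove)
      refine ⟨1 + u, t, i.succAbove ∘ ι',
        Fin.succAbove_right_injective.comp hinj', hanis', ?_⟩
      have h3 := isom_append_left (fun _ : Fin 1 => (0 : K)) h2'
      have h4 := isom_zero_assoc (K := K) (c := 1) (u := u) ((d ∘ i.succAbove) ∘ ι')
      exact isom_trans (isom_trans h1 h3) h4

lemma isom_bc {F : Type} [Field F] (h2 : (2 : F) = 0) (L : Type) [Field L] [Algebra F L]
    {a b : ℕ} {d : Fin a → F} {e : Fin b → F} (h : Isom F d e) :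
    Isom L (bc F L d) (bc F L e) := by
  have h2L : (2 : L) = 0 := by
    rw [show (2 : L) = algebraMap F L 2 from (map_ofNat (algebraMap F L) 2).symm, h2, map_zero]
  obtain ⟨φ, hφ⟩ := h
  have hab : a = b := by
    have := φ.finrank_eq
    simpa [Module.finrank_fin_fun] using this
  subst hab
  set M := LinearMap.toMatrix' (φ.toLinearMap) with hM
  set N := LinearMap.toMatrix' (φ.symm.toLinearMap) with hN
  have hMN : M * N = 1 := by
    rw [hM, hN, ← LinearMap.toMatrix'_comp,
      show φ.toLinearMap.comp φ.symm.toLinearMap = LinearMap.id from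
        LinearMap.ext fun x => φ.apply_symm_apply x,
      LinearMap.toMatrix'_id]
  have hNM : N * M = 1 := by
    rw [hM, hN, ← LinearMap.toMatrix'_comp,
      show φ.symm.toLinearMap.comp φ.toLinearMap = LinearMap.id from
        LinearMap.ext fun x => φ.symm_apply_apply x,
      LinearMap.toMatrix'_id]
  set f := algebraMap F L with hf
  set ML := M.map f with hML
  set NL := N.map f with hNL
  have hMLNL : ML * NL = 1 := by
    rw [hML, hNL, ← Matrix.map_mul, hMN, Matrix.map_one f (map_zero f) (map_one f)]
  have hNLML : NL * ML = 1 := by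
    rw [hML, hNL, ← Matrix.map_mul, hNM, Matrix.map_one f (map_zero f) (map_one f)]
  set E : (Fin a → L) ≃ₗ[L] (Fin a → L) := LinearEquiv.ofLinear
    (Matrix.toLin' ML) (Matrix.toLin' NL)
    (by rw [← Matrix.toLin'_mul, hMLNL, Matrix.toLin'_one])
    (by rw [← Matrix.toLin'_mul, hNLML, Matrix.toLin'_one]) with hE
  have hcol : ∀ j, qf F e (fun i' => M i' j) = d j := by
    intro j
    have h1 : (fun i' => M i' j) = φ (fun j' => if j' = j then 1 else 0) := by
      funext i'
      rw [hM, LinearMap.toMatrix'_apply, LinearEquiv.coe_coe]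
      rw [show (Pi.single j 1 : Fin a → F) = fun j' => if j' = j then 1 else 0 from
        funext fun j' => by simp [Pi.single_apply]]
    rw [h1, hφ]
    have hsingle : ∀ j', d j' * (if j' = j then (1 : F) else 0) ^ 2
        = if j' = j then d j' else 0 := by
      intro j'
      split <;> simp
    simp only [qf, hsingle, Finset.sum_ite_eq', Finset.mem_univ, if_true]
  refine ⟨E, fun v => ?_⟩
  have hEv : ∀ i', E v i' = ∑ j, f (M i' j) * v j := by
    intro i'
    show Matrix.toLin' ML v i' = _
    rw [Matrix.toLin'_apply]
    simp [Matrix.mulVec, dotProduct, hML]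
  calc qf L (bc F L e) (E v) = ∑ i', f (e i') * (∑ j, f (M i' j) * v j) ^ 2 := by
        simp only [qf, bc]
        exact Finset.sum_congr rfl fun i' _ => by rw [hEv]
    _ = ∑ i', ∑ j, f (e i') * (f (M i' j) ^ 2 * v j ^ 2) := by
        refine Finset.sum_congr rfl fun i' _ => ?_
        rw [sq_sum h2L, Finset.mul_sum]
        exact Finset.sum_congr rfl fun j _ => by ring
    _ = ∑ j, f (∑ i', e i' * (M i' j) ^ 2) * v j ^ 2 := by
        rw [Finset.sum_comm]
        refine Finset.sum_congr rfl fun j _ => ?_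
        rw [map_sum, Finset.sum_mul]
        refine Finset.sum_congr rfl fun i' _ => ?_
        rw [map_mul, map_pow]
        ring
    _ = qf L (bc F L d) v := by
        simp only [qf, bc]
        refine Finset.sum_congr rfl fun j _ => ?_
        rw [show ∑ i', e i' * (M i' j) ^ 2 = qf F e (fun i' => M i' j) from rfl, hcol j]

lemma bc_append {F : Type} [Field F] (L : Type) [Field L] [Algebra F L] {a b : ℕ}
    (f : Fin a → F) (g : Fin b → F) :
    bc F L (Fin.append f g) = Fin.append (bc F L f) (bc F L g) := by
  funext x
  induction x using Fin.addCases with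
  | left i => simp [bc, Fin.append_left]
  | right j => simp [bc, Fin.append_right]

lemma bc_zero {F : Type} [Field F] (L : Type) [Field L] [Algebra F L] {k : ℕ} :
    bc F L (fun _ : Fin k => (0 : F)) = fun _ : Fin k => (0 : L) := by
  funext x
  simp [bc]

end Helpers

open QLin in
/-- Let `q` be a quasilinear quadratic form over a field `F` of
characteristic `2` and `L` a field extension of `F`. Then there exists a subform `r` of
the anisotropic part `q_an` such that `r_L ≅ (q_L)_an`. -/
theorem statement5 (F : Type) [Field F] (h2 : (2 : F) = 0) {n : ℕ} (q : Fin n → F)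
    (L : Type) [Field L] [Algebra F L]
    (m : ℕ) (qan : Fin m → F) (hqan : IsAnisPart F qan q) :
    ∃ (k : ℕ) (r : Fin k → F), Subform F r qan ∧
      IsAnisPart L (bc F L r) (bc F L q) := by
  obtain ⟨hAnis, k, hIso⟩ := hqan
  have h2L : (2 : L) = 0 := by
    rw [show (2 : L) = algebraMap F L 2 from (map_ofNat (algebraMap F L) 2).symm, h2, map_zero]
  obtain ⟨u, t, ι, hinj, hanis, hmain⟩ := main_ind h2L m (bc F L qan)
  refine ⟨t, qan ∘ ι, subform_of_injective qan ι hinj, hanis, k + u, ?_⟩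
  have hb := isom_bc h2 L hIso
  rw [bc_append, bc_zero] at hb
  have h3 := isom_append_left (fun _ : Fin k => (0 : L)) hmain
  have h4 := isom_zero_assoc (K := L) (c := k) (u := u) ((bc F L qan) ∘ ι)
  exact isom_trans (isom_trans hb h3) h4
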